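/- Heat-kernel oscillation bound: for f_n(y) = p_n(x₀,y) + p_{n+1}(x₀,y), and all vertices y, |f_n(y) − f_n(x₀)|² ≤ (2/n)·d(x₀,y)·f_{2⌊n/2⌋}(x₀). -/

import Mathlib

open scoped ENNReal

attribute [local instance] Classical.propDecidable

variable {V : Type*}

/-- Degree of a vertex. -/
noncomputable def vdeg (G : SimpleGraph V) (x : V) : ℕ := (G.neighborSet x).ncard

/-- One-step transition probability of the simple random walk:
`P^x(X_1 = y) = 1/μ_x` for `y ∼ x`, and `0` otherwise. -/
noncomputable def stepP (G : SimpleGraph V) (x y : V) : ℝ :=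
  (G.neighborSet x).indicator (fun _ => ((vdeg G x : ℝ))⁻¹) y

/-- `walkP G n x y = P^x(X_n = y)`, the `n`-step transition probability. -/
noncomputable def walkP (G : SimpleGraph V) : ℕ → V → V → ℝ
  | 0, x, y => if x = y then 1 else 0
  | n + 1, x, y => ∑' z : V, stepP G x z * walkP G n z y

/-- The heat kernel `p_n(x,y) = P^x(X_n = y)/μ_y`. -/
noncomputable def hkP (G : SimpleGraph V) (n : ℕ) (x y : V) : ℝ :=
  walkP G n x y / (vdeg G y : ℝ)

/-- `killedP G B n x y = P^x(X_n = y, n < τ_B)`, the transition probability of the walk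
killed upon exiting `B` (the path stays in `B` up to and including time `n`). -/
noncomputable def killedP (G : SimpleGraph V) (B : Set V) : ℕ → V → V → ℝ
  | 0, x, y => if x = y ∧ x ∈ B then 1 else 0
  | n + 1, x, y => ∑' z : V, B.indicator (fun w => stepP G w z) x * killedP G B n z y

/-- `exitTail G B x n = P^x(τ_B > n)`, the tail of the exit time of `B`. -/
noncomputable def exitTail (G : SimpleGraph V) (B : Set V) (x : V) (n : ℕ) : ℝ :=
  ∑' y : V, killedP G B n x y

/-- `meanExit G B x = E^x τ_B`, the mean exit time of `B`. -/
noncomputable def meanExit (G : SimpleGraph V) (B : Set V) (x : V) : ℝ :=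
  ∑' n : ℕ, exitTail G B x n

/-- `firstHitP G B y n x = P^x(T_y = n, n < τ_B)`: the probability that the walk started
at `x` first hits `y` at time `n`, before exiting `B`. -/
noncomputable def firstHitP (G : SimpleGraph V) (B : Set V) (y : V) : ℕ → V → ℝ
  | 0, x => if x = y ∧ x ∈ B then 1 else 0
  | n + 1, x => ∑' z : V, (B \ {y}).indicator (fun w => stepP G w z) x * firstHitP G B y n z

/-- The Green kernel of the walk killed on exiting `B`:
`g_B(x,y) = μ_y⁻¹ ∑_{k≥0} P^x(X_k = y, k < τ_B)`. -/
noncomputable def greenB (G : SimpleGraph V) (B : Set V) (x y : V) : ℝ :=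
  (∑' n : ℕ, killedP G B n x y) / (vdeg G y : ℝ)

section Basic

variable (G : SimpleGraph V)

lemma stepP_eq (x y : V) : stepP G x y = if G.Adj x y then ((vdeg G x : ℝ))⁻¹ else 0 := by
  simp [stepP, Set.indicator, SimpleGraph.mem_neighborSet]

lemma stepP_nonneg (x y : V) : 0 ≤ stepP G x y := by
  rw [stepP_eq]; split <;> positivity

lemma stepP_eq_zero_of_not_adj {x y : V} (h : ¬ G.Adj x y) : stepP G x y = 0 := by
  rw [stepP_eq]; simp [h]

lemma vdeg_pos_of_adj (hlf : ∀ v : V, (G.neighborSet v).Finite) {x y : V} (h : G.Adj x y) :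
    0 < vdeg G x :=
  (Set.ncard_pos (hlf x)).2 ⟨y, h⟩

lemma stepP_pos_of_adj (hlf : ∀ v : V, (G.neighborSet v).Finite) {x y : V} (h : G.Adj x y) :
    0 < stepP G x y := by
  rw [stepP_eq, if_pos h]
  have := vdeg_pos_of_adj G hlf h
  positivity

lemma vdeg_mul_stepP (hlf : ∀ v : V, (G.neighborSet v).Finite) (x y : V) :
    (vdeg G x : ℝ) * stepP G x y = if G.Adj x y then 1 else 0 := by
  rw [stepP_eq]
  by_cases h : G.Adj x y
  · rw [if_pos h, if_pos h]
    have := vdeg_pos_of_adj G hlf h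
    field_simp
  · rw [if_neg h, if_neg h, mul_zero]

lemma walkP_zero (x y : V) : walkP G 0 x y = if x = y then 1 else 0 := rfl

lemma walkP_succ (n : ℕ) (x y : V) :
    walkP G (n + 1) x y = ∑' z : V, stepP G x z * walkP G n z y := rfl

lemma walkP_nonneg (n : ℕ) (x y : V) : 0 ≤ walkP G n x y := by
  induction n generalizing x y with
  | zero => rw [walkP_zero]; split <;> norm_num
  | succ n ih =>
      rw [walkP_succ]
      exact tsum_nonneg fun z => mul_nonneg (stepP_nonneg G x z) (ih z y)

/-- finite support of `walkP` in the second vertex -/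
lemma walkP_support_finite (hlf : ∀ v : V, (G.neighborSet v).Finite) (n : ℕ) (x : V) : {y | walkP G n x y ≠ 0}.Finite := by
  induction n generalizing x with
  | zero =>
      apply Set.Finite.subset (Set.finite_singleton x)
      intro y hy
      simp only [Set.mem_setOf_eq, walkP_zero] at hy
      have : x = y := by by_contra h; exact hy (if_neg h)
      simp [this.symm]
  | succ n ih =>
      have : {y | walkP G (n+1) x y ≠ 0} ⊆
          ⋃ z ∈ G.neighborSet x, {y | walkP G n z y ≠ 0} := by
        intro y hy
        simp only [Set.mem_setOf_eq, walkP_succ] at hy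
        by_contra hc
        apply hy
        have hall : ∀ z, stepP G x z * walkP G n z y = 0 := by
          intro z
          by_cases hz : G.Adj x z
          · by_cases hw : walkP G n z y = 0
            · rw [hw, mul_zero]
            · exfalso
              exact hc (Set.mem_biUnion hz hw)
          · rw [stepP_eq_zero_of_not_adj G hz, zero_mul]
        simp [hall]
      exact Set.Finite.subset (Set.Finite.biUnion (hlf x) (fun z _ => ih z)) this

lemma walkP_summable (hlf : ∀ v : V, (G.neighborSet v).Finite) (n : ℕ) (x : V) (g : V → ℝ)
    (h : ∀ y, walkP G n x y = 0 → g y = 0) : Summable g := by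
  apply summable_of_ne_finset_zero (s := (walkP_support_finite G hlf n x).toFinset)
  intro b hb
  apply h
  by_contra hc
  exact hb ((walkP_support_finite G hlf n x).mem_toFinset.2 hc)

end Basic

section CK

variable (G : SimpleGraph V)

lemma walkP_succ_sum (hlf : ∀ v : V, (G.neighborSet v).Finite) (n : ℕ) (x y : V) :
    walkP G (n + 1) x y = ∑ z ∈ (hlf x).toFinset, stepP G x z * walkP G n z y := by
  rw [walkP_succ]
  apply tsum_eq_sum
  intro b hb
  rw [stepP_eq_zero_of_not_adj G, zero_mul]
  intro hadj
  exact hb ((hlf x).mem_toFinset.2 hadj)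

lemma walkP_one (x y : V) : walkP G 1 x y = stepP G x y := by
  rw [walkP_succ, tsum_eq_single y]
  · rw [walkP_zero, if_pos rfl, mul_one]
  · intro b hb
    rw [walkP_zero, if_neg hb, mul_zero]

lemma walkP_succ_ne_zero (hlf : ∀ v : V, (G.neighborSet v).Finite) {n : ℕ} {x w : V} (h : walkP G (n + 1) x w ≠ 0) :
    ∃ z, G.Adj x z ∧ walkP G n z w ≠ 0 := by
  rw [walkP_succ_sum G hlf] at h
  obtain ⟨z, hz, hne⟩ := Finset.exists_ne_zero_of_sum_ne_zero h
  refine ⟨z, (hlf x).mem_toFinset.1 hz, fun hc => hne (by rw [hc, mul_zero])⟩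

lemma walkP_add (hlf : ∀ v : V, (G.neighborSet v).Finite) (m n : ℕ) (x y : V) :
    walkP G (m + n) x y = ∑' z : V, walkP G m x z * walkP G n z y := by
  induction m generalizing x with
  | zero =>
      simp only [Nat.zero_add]
      rw [tsum_eq_single x]
      · rw [walkP_zero, if_pos rfl, one_mul]
      · intro b hb
        rw [walkP_zero, if_neg (Ne.symm hb), zero_mul]
  | succ m ih =>
      have hTfin : (⋃ z ∈ G.neighborSet x, {w | walkP G m z w ≠ 0}).Finite :=
        Set.Finite.biUnion (hlf x) (fun z _ => walkP_support_finite G hlf m z)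
      set T := hTfin.toFinset with hT
      have hmem : ∀ z, G.Adj x z → ∀ w, walkP G m z w ≠ 0 → w ∈ T := by
        intro z hz w hw
        rw [hT, Set.Finite.mem_toFinset]
        exact Set.mem_biUnion hz hw
      have h1 : walkP G (m + 1 + n) x y
          = ∑ z ∈ (hlf x).toFinset, stepP G x z * walkP G (m + n) z y := by
        have he : m + 1 + n = (m + n) + 1 := by ring
        rw [he, walkP_succ_sum G hlf]
      rw [h1]
      have h2 : ∀ z ∈ (hlf x).toFinset,
          stepP G x z * walkP G (m + n) z y
            = ∑ w ∈ T, stepP G x z * (walkP G m z w * walkP G n w y) := by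
        intro z hz
        rw [ih z, ← Finset.mul_sum]
        congr 1
        apply tsum_eq_sum
        intro b hb
        rw [show walkP G m z b = 0 from by
          by_contra hc
          exact hb (hmem z ((hlf x).mem_toFinset.1 hz) b hc), zero_mul]
      rw [Finset.sum_congr rfl h2, Finset.sum_comm]
      have h3 : ∀ w ∈ T,
          (∑ z ∈ (hlf x).toFinset, stepP G x z * (walkP G m z w * walkP G n w y))
            = walkP G (m + 1) x w * walkP G n w y := by
        intro w _
        rw [walkP_succ_sum G hlf, Finset.sum_mul]
        exact Finset.sum_congr rfl fun z _ => by ring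
      rw [Finset.sum_congr rfl h3]
      symm
      apply tsum_eq_sum
      intro b hb
      rw [show walkP G (m + 1) x b = 0 from by
        by_contra hc
        obtain ⟨z, hz, hne⟩ := walkP_succ_ne_zero G hlf hc
        exact hb (hmem z hz b hne), zero_mul]

lemma walkP_succ' (hlf : ∀ v : V, (G.neighborSet v).Finite) (n : ℕ) (x y : V) :
    walkP G (n + 1) x y = ∑' z : V, walkP G n x z * stepP G z y := by
  have h := walkP_add G hlf n 1 x y
  simp only [walkP_one] at h
  exact h

lemma walkP_symm (hlf : ∀ v : V, (G.neighborSet v).Finite) (n : ℕ) (x y : V) :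
    (vdeg G x : ℝ) * walkP G n x y = (vdeg G y : ℝ) * walkP G n y x := by
  induction n generalizing x y with
  | zero =>
      rw [walkP_zero, walkP_zero]
      by_cases h : x = y
      · subst h; rfl
      · rw [if_neg h, if_neg (fun hc => h hc.symm), mul_zero, mul_zero]
  | succ n ih =>
      have hL : (vdeg G x : ℝ) * walkP G (n + 1) x y
          = ∑ z ∈ (hlf x).toFinset, walkP G n z y := by
        rw [walkP_succ_sum G hlf, Finset.mul_sum]
        refine Finset.sum_congr rfl fun z hz => ?_
        have hadj : G.Adj x z := (hlf x).mem_toFinset.1 hz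
        rw [← mul_assoc, vdeg_mul_stepP G hlf, if_pos hadj, one_mul]
      have hR : (vdeg G y : ℝ) * walkP G (n + 1) y x
          = ∑ z ∈ (hlf x).toFinset, walkP G n z y := by
        rw [walkP_succ' G hlf]
        have hconv : (∑' z : V, walkP G n y z * stepP G z x)
            = ∑ z ∈ (hlf x).toFinset, walkP G n y z * stepP G z x := by
          apply tsum_eq_sum
          intro b hb
          rw [stepP_eq_zero_of_not_adj G, mul_zero]
          intro hadj
          exact hb ((hlf x).mem_toFinset.2 hadj.symm)
        rw [hconv, Finset.mul_sum]
        refine Finset.sum_congr rfl fun z hz => ?_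
        have hadj : G.Adj x z := (hlf x).mem_toFinset.1 hz
        calc (vdeg G y : ℝ) * (walkP G n y z * stepP G z x)
            = ((vdeg G y : ℝ) * walkP G n y z) * stepP G z x := by ring
          _ = ((vdeg G z : ℝ) * walkP G n z y) * stepP G z x := by rw [ih]
          _ = ((vdeg G z : ℝ) * stepP G z x) * walkP G n z y := by ring
          _ = walkP G n z y := by
              rw [vdeg_mul_stepP G hlf, if_pos hadj.symm, one_mul]
      rw [hL, hR]

lemma walkP_ne_zero_step (hlf : ∀ v : V, (G.neighborSet v).Finite) {n : ℕ} {x y z : V} (h : walkP G n x y ≠ 0) (hadj : G.Adj y z) :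
    walkP G (n + 1) x z ≠ 0 := by
  have hpos : 0 < walkP G n x y := lt_of_le_of_ne (walkP_nonneg G n x y) (Ne.symm h)
  have hsum : Summable (fun w => walkP G n x w * stepP G w z) :=
    walkP_summable G hlf n x _ (fun w hw => by rw [hw, zero_mul])
  have hg : walkP G n x y * stepP G y z ≤ walkP G (n + 1) x z := by
    rw [walkP_succ' G hlf]
    exact Summable.le_tsum hsum y fun b _ => mul_nonneg (walkP_nonneg G n x b) (stepP_nonneg G b z)
  exact ne_of_gt (lt_of_lt_of_le (mul_pos hpos (stepP_pos_of_adj G hlf hadj)) hg)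

end CK

section Conn

variable (G : SimpleGraph V)

lemma exists_adj [Infinite V] (hconn : G.Connected) (x : V) : ∃ y, G.Adj x y := by
  obtain ⟨y, hy⟩ := exists_ne x
  obtain ⟨w⟩ := hconn.preconnected x y
  cases w with
  | nil => exact absurd rfl hy
  | cons h _ => exact ⟨_, h⟩

lemma vdeg_pos' [Infinite V] (hconn : G.Connected) (hlf : ∀ v : V, (G.neighborSet v).Finite)
    (x : V) : 0 < (vdeg G x : ℝ) := by
  obtain ⟨y, hy⟩ := exists_adj G hconn x
  exact_mod_cast vdeg_pos_of_adj G hlf hy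

lemma hkP_symm [Infinite V] (hconn : G.Connected) (hlf : ∀ v : V, (G.neighborSet v).Finite)
    (n : ℕ) (x y : V) : hkP G n x y = hkP G n y x := by
  have hx := vdeg_pos' G hconn hlf x
  have hy := vdeg_pos' G hconn hlf y
  simp only [hkP]
  rw [div_eq_div_iff (ne_of_gt hy) (ne_of_gt hx)]
  have := walkP_symm G hlf n x y
  linarith [walkP_symm G hlf n x y]

lemma hkP_nonneg (n : ℕ) (x y : V) : 0 ≤ hkP G n x y :=
  div_nonneg (walkP_nonneg G n x y) (by positivity)

lemma hkP_ne_zero {k : ℕ} {x w : V} (h : hkP G k x w ≠ 0) : walkP G k x w ≠ 0 := by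
  intro hc
  exact h (by simp [hkP, hc])

end Conn

noncomputable def ffk (G : SimpleGraph V) (x₀ : V) (k : ℕ) (y : V) : ℝ :=
  hkP G k x₀ y + hkP G (k + 1) x₀ y

noncomputable def qk (G : SimpleGraph V) (x₀ : V) (k : ℕ) : ℝ := hkP G k x₀ x₀

noncomputable def ak (G : SimpleGraph V) (x₀ : V) (k : ℕ) : ℝ := qk G x₀ k + qk G x₀ (k + 1)

noncomputable def ck (G : SimpleGraph V) (x₀ : V) (k : ℕ) : ℝ :=
  ak G x₀ (2 * k) - ak G x₀ (2 * k + 2)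

section Form

variable (G : SimpleGraph V) [Infinite V]

lemma ffk_ne_zero (G : SimpleGraph V) {x₀ : V} {k : ℕ} {w : V} (h : ffk G x₀ k w ≠ 0) :
    walkP G k x₀ w ≠ 0 ∨ walkP G (k + 1) x₀ w ≠ 0 := by
  by_contra hc
  push_neg at hc
  exact h (by simp [ffk, hkP, hc.1, hc.2])

lemma ip_hkP (hconn : G.Connected) (hlf : ∀ v : V, (G.neighborSet v).Finite)
    (x₀ : V) (S : Finset V) (k l : ℕ)
    (hk : ∀ w, walkP G k x₀ w ≠ 0 → w ∈ S) :
    ∑ y ∈ S, hkP G k x₀ y * hkP G l x₀ y * (vdeg G y : ℝ) = hkP G (k + l) x₀ x₀ := by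
  have hx₀ : 0 < (vdeg G x₀ : ℝ) := vdeg_pos' G hconn hlf x₀
  have hterm : ∀ y : V, hkP G k x₀ y * hkP G l x₀ y * (vdeg G y : ℝ)
      = walkP G k x₀ y * walkP G l y x₀ / (vdeg G x₀ : ℝ) := by
    intro y
    have hy : 0 < (vdeg G y : ℝ) := vdeg_pos' G hconn hlf y
    rw [hkP_symm G hconn hlf l x₀ y]
    simp only [hkP]
    field_simp
  rw [Finset.sum_congr rfl (fun y _ => hterm y), ← Finset.sum_div]
  simp only [hkP]
  congr 1
  rw [walkP_add G hlf k l x₀ x₀]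
  symm
  apply tsum_eq_sum
  intro b hb
  rw [show walkP G k x₀ b = 0 from by_contra fun hc => hb (hk b hc), zero_mul]

lemma shift_hkP (hconn : G.Connected) (hlf : ∀ v : V, (G.neighborSet v).Finite)
    (x₀ : V) (y : V) (k : ℕ) :
    ∑ x ∈ (hlf y).toFinset, hkP G k x₀ x = (vdeg G y : ℝ) * hkP G (k + 1) x₀ y := by
  have hx₀ : 0 < (vdeg G x₀ : ℝ) := vdeg_pos' G hconn hlf x₀
  have hy : 0 < (vdeg G y : ℝ) := vdeg_pos' G hconn hlf y
  have h1 : ∀ x ∈ (hlf y).toFinset, hkP G k x₀ x = walkP G k x x₀ / (vdeg G x₀ : ℝ) := by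
    intro x _
    rw [hkP_symm G hconn hlf k x₀ x]
    rfl
  rw [Finset.sum_congr rfl h1, ← Finset.sum_div]
  have h2 : walkP G (k + 1) y x₀
      = (vdeg G y : ℝ)⁻¹ * ∑ z ∈ (hlf y).toFinset, walkP G k z x₀ := by
    rw [walkP_succ_sum G hlf, Finset.mul_sum]
    refine Finset.sum_congr rfl fun z hz => ?_
    have hadj : G.Adj y z := (hlf y).mem_toFinset.1 hz
    rw [stepP_eq, if_pos hadj]
  have h3 : hkP G (k + 1) x₀ y = walkP G (k + 1) y x₀ / (vdeg G x₀ : ℝ) := by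
    rw [hkP_symm G hconn hlf (k + 1) x₀ y]
    rfl
  rw [h3, h2]
  field_simp

lemma shift_ffk (hconn : G.Connected) (hlf : ∀ v : V, (G.neighborSet v).Finite)
    (x₀ : V) (y : V) (k : ℕ) :
    ∑ x ∈ (hlf y).toFinset, ffk G x₀ k x = (vdeg G y : ℝ) * ffk G x₀ (k + 1) y := by
  simp only [ffk]
  rw [Finset.sum_add_distrib, shift_hkP G hconn hlf x₀ y k, shift_hkP G hconn hlf x₀ y (k + 1),
    mul_add]

end Form

section QuadForm

variable (G : SimpleGraph V) [Infinite V]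

lemma sum_ite_adj (hlf : ∀ v : V, (G.neighborSet v).Finite) (S : Finset V) (y : V)
    (hy : ∀ z, G.Adj y z → z ∈ S) :
    ∑ x ∈ S, (if G.Adj y x then (1:ℝ) else 0) = (vdeg G y : ℝ) := by
  rw [← Finset.sum_filter]
  rw [show S.filter (fun x => G.Adj y x) = (hlf y).toFinset from by
    ext z
    simp only [Finset.mem_filter, Set.Finite.mem_toFinset, SimpleGraph.mem_neighborSet]
    exact ⟨fun h => h.2, fun h => ⟨hy z h, h⟩⟩]
  rw [Finset.sum_const, vdeg, Set.ncard_eq_toFinset_card _ (hlf y)]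
  simp

lemma diag_sum (hlf : ∀ v : V, (G.neighborSet v).Finite) (S : Finset V) (g h : V → ℝ)
    (hnb : ∀ x z, g x * h x ≠ 0 → G.Adj x z → z ∈ S) :
    ∑ x ∈ S, ∑ y ∈ S, (if G.Adj x y then (1:ℝ) else 0) * (g x * h x)
      = ∑ x ∈ S, g x * h x * (vdeg G x : ℝ) := by
  refine Finset.sum_congr rfl fun x _ => ?_
  by_cases hc : g x * h x = 0
  · simp [hc]
  · rw [← Finset.sum_mul, sum_ite_adj G hlf S x (fun z hz => hnb x z hc hz)]
    ring

lemma diag_sum' (hlf : ∀ v : V, (G.neighborSet v).Finite) (S : Finset V) (g h : V → ℝ)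
    (hnb : ∀ x z, g x * h x ≠ 0 → G.Adj x z → z ∈ S) :
    ∑ x ∈ S, ∑ y ∈ S, (if G.Adj x y then (1:ℝ) else 0) * (g y * h y)
      = ∑ y ∈ S, g y * h y * (vdeg G y : ℝ) := by
  rw [Finset.sum_comm]
  refine Finset.sum_congr rfl fun y _ => ?_
  by_cases hc : g y * h y = 0
  · simp [hc]
  · rw [← Finset.sum_mul]
    rw [show ∑ x ∈ S, (if G.Adj x y then (1:ℝ) else 0)
        = ∑ x ∈ S, (if G.Adj y x then (1:ℝ) else 0) from
      Finset.sum_congr rfl fun x _ => by rw [G.adj_comm]]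
    rw [sum_ite_adj G hlf S y (fun z hz => hnb y z hc hz)]
    ring

lemma cross_ffk (hconn : G.Connected) (hlf : ∀ v : V, (G.neighborSet v).Finite)
    (x₀ : V) (S : Finset V) (k l : ℕ)
    (hk : ∀ w, walkP G k x₀ w ≠ 0 → w ∈ S)
    (hk1 : ∀ w, walkP G (k + 1) x₀ w ≠ 0 → w ∈ S) :
    ∑ x ∈ S, ∑ y ∈ S, (if G.Adj x y then (1:ℝ) else 0) * (ffk G x₀ k x * ffk G x₀ l y)
      = ∑ y ∈ S, (vdeg G y : ℝ) * ffk G x₀ (k + 1) y * ffk G x₀ l y := by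
  rw [Finset.sum_comm]
  refine Finset.sum_congr rfl fun y _ => ?_
  have hinner : ∑ x ∈ S, (if G.Adj x y then (1:ℝ) else 0) * (ffk G x₀ k x * ffk G x₀ l y)
      = (∑ x ∈ S, (if G.Adj x y then (1:ℝ) else 0) * ffk G x₀ k x) * ffk G x₀ l y := by
    rw [Finset.sum_mul]
    exact Finset.sum_congr rfl fun x _ => by ring
  rw [hinner]
  have h2 : ∑ x ∈ S, (if G.Adj x y then (1:ℝ) else 0) * ffk G x₀ k x
      = ∑ x ∈ (hlf y).toFinset, ffk G x₀ k x := by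
    simp only [ite_mul, one_mul, zero_mul]
    rw [← Finset.sum_filter]
    apply Finset.sum_subset
    · intro x hx
      rw [Finset.mem_filter] at hx
      exact (hlf y).mem_toFinset.2 hx.2.symm
    · intro x hxN hxf
      by_contra hne
      have hin : x ∈ S := (ffk_ne_zero G hne).elim (fun h => hk x h) (fun h => hk1 x h)
      have hadj : G.Adj x y := ((hlf y).mem_toFinset.1 hxN).symm
      exact hxf (Finset.mem_filter.2 ⟨hin, hadj⟩)
  rw [h2, shift_ffk G hconn hlf x₀ y k]

lemma ip_ffk (hconn : G.Connected) (hlf : ∀ v : V, (G.neighborSet v).Finite)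
    (x₀ : V) (S : Finset V) (k l : ℕ)
    (hall : ∀ j, j ≤ max k l + 1 → ∀ w, walkP G j x₀ w ≠ 0 → w ∈ S) :
    ∑ y ∈ S, ffk G x₀ k y * ffk G x₀ l y * (vdeg G y : ℝ)
      = qk G x₀ (k + l) + 2 * qk G x₀ (k + l + 1) + qk G x₀ (k + l + 2) := by
  have e1 := ip_hkP G hconn hlf x₀ S k l (hall k (by omega))
  have e2 := ip_hkP G hconn hlf x₀ S k (l + 1) (hall k (by omega))
  have e3 := ip_hkP G hconn hlf x₀ S (k + 1) l (hall (k + 1) (by omega))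
  have e4 := ip_hkP G hconn hlf x₀ S (k + 1) (l + 1) (hall (k + 1) (by omega))
  have hsplit : ∀ y ∈ S, ffk G x₀ k y * ffk G x₀ l y * (vdeg G y : ℝ)
      = hkP G k x₀ y * hkP G l x₀ y * (vdeg G y : ℝ)
      + hkP G k x₀ y * hkP G (l + 1) x₀ y * (vdeg G y : ℝ)
      + (hkP G (k + 1) x₀ y * hkP G l x₀ y * (vdeg G y : ℝ)
      + hkP G (k + 1) x₀ y * hkP G (l + 1) x₀ y * (vdeg G y : ℝ)) := by
    intro y _
    simp only [ffk]
    ring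
  rw [Finset.sum_congr rfl hsplit]
  simp only [Finset.sum_add_distrib]
  rw [e1, e2, e3, e4]
  simp only [qk]
  rw [show k + (l + 1) = k + l + 1 from by ring, show k + 1 + l = k + l + 1 from by ring,
    show k + 1 + (l + 1) = k + l + 2 from by ring]
  ring

lemma Bq_ffk (hconn : G.Connected) (hlf : ∀ v : V, (G.neighborSet v).Finite)
    (x₀ : V) (S : Finset V) (k l : ℕ)
    (hsup : ∀ j, j ≤ max k l + 2 → ∀ w, walkP G j x₀ w ≠ 0 → w ∈ S) :
    ∑ x ∈ S, ∑ y ∈ S, (if G.Adj x y then (1:ℝ) else 0) *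
        ((ffk G x₀ k x - ffk G x₀ k y) * (ffk G x₀ l x - ffk G x₀ l y))
      = 2 * (ak G x₀ (k + l) - ak G x₀ (k + l + 2)) := by
  have hnbk : ∀ x z, ffk G x₀ k x * ffk G x₀ l x ≠ 0 → G.Adj x z → z ∈ S := by
    intro x z hx hadj
    rcases ffk_ne_zero G (mul_ne_zero_iff.1 hx).1 with h | h
    · exact hsup (k + 1) (by omega) z (walkP_ne_zero_step G hlf h hadj)
    · exact hsup (k + 2) (by omega) z (walkP_ne_zero_step G hlf h hadj)
  have expand : ∀ x y : V, (if G.Adj x y then (1:ℝ) else 0) *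
      ((ffk G x₀ k x - ffk G x₀ k y) * (ffk G x₀ l x - ffk G x₀ l y))
    = (if G.Adj x y then (1:ℝ) else 0) * (ffk G x₀ k x * ffk G x₀ l x)
      + (if G.Adj x y then (1:ℝ) else 0) * (ffk G x₀ k y * ffk G x₀ l y)
      - ((if G.Adj x y then (1:ℝ) else 0) * (ffk G x₀ k x * ffk G x₀ l y)
      + (if G.Adj x y then (1:ℝ) else 0) * (ffk G x₀ l x * ffk G x₀ k y)) := by
    intro x y
    ring
  rw [Finset.sum_congr rfl (fun x _ => Finset.sum_congr rfl (fun y _ => expand x y))]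
  simp only [Finset.sum_add_distrib, Finset.sum_sub_distrib]
  rw [diag_sum G hlf S _ _ hnbk, diag_sum' G hlf S _ _ hnbk,
    cross_ffk G hconn hlf x₀ S k l (hsup k (by omega)) (hsup (k + 1) (by omega)),
    cross_ffk G hconn hlf x₀ S l k (hsup l (by omega)) (hsup (l + 1) (by omega))]
  have hc1 : ∑ y ∈ S, (vdeg G y : ℝ) * ffk G x₀ (k + 1) y * ffk G x₀ l y
      = qk G x₀ (k + l + 1) + 2 * qk G x₀ (k + l + 2) + qk G x₀ (k + l + 3) := by
    rw [show ∑ y ∈ S, (vdeg G y : ℝ) * ffk G x₀ (k + 1) y * ffk G x₀ l y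
        = ∑ y ∈ S, ffk G x₀ (k + 1) y * ffk G x₀ l y * (vdeg G y : ℝ) from
      Finset.sum_congr rfl fun y _ => by ring]
    rw [ip_ffk G hconn hlf x₀ S (k + 1) l (fun j hj => hsup j (by omega))]
    rw [show k + 1 + l = k + l + 1 from by ring, show k + l + 1 + 1 = k + l + 2 from by ring,
      show k + l + 1 + 2 = k + l + 3 from by ring]
  have hc2 : ∑ y ∈ S, (vdeg G y : ℝ) * ffk G x₀ (l + 1) y * ffk G x₀ k y
      = qk G x₀ (k + l + 1) + 2 * qk G x₀ (k + l + 2) + qk G x₀ (k + l + 3) := by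
    rw [show ∑ y ∈ S, (vdeg G y : ℝ) * ffk G x₀ (l + 1) y * ffk G x₀ k y
        = ∑ y ∈ S, ffk G x₀ (l + 1) y * ffk G x₀ k y * (vdeg G y : ℝ) from
      Finset.sum_congr rfl fun y _ => by ring]
    rw [ip_ffk G hconn hlf x₀ S (l + 1) k (fun j hj => hsup j (by omega))]
    rw [show l + 1 + k = k + l + 1 from by ring, show k + l + 1 + 1 = k + l + 2 from by ring,
      show k + l + 1 + 2 = k + l + 3 from by ring]
  rw [hc1, hc2, ip_ffk G hconn hlf x₀ S k l (fun j hj => hsup j (by omega))]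
  simp only [ak, qk]
  rw [show k + l + 1 + 1 = k + l + 2 from by ring, show k + l + 2 + 1 = k + l + 3 from by ring]
  ring

end QuadForm

section Seq

variable (G : SimpleGraph V) [Infinite V]

lemma exists_S (hlf : ∀ v : V, (G.neighborSet v).Finite) (x₀ : V) (K : ℕ) :
    ∃ S : Finset V, ∀ j, j ≤ K → ∀ w, walkP G j x₀ w ≠ 0 → w ∈ S := by
  have hfin : (⋃ j ∈ Finset.range (K + 1), {w | walkP G j x₀ w ≠ 0}).Finite :=
    Set.Finite.biUnion (Finset.range (K + 1)).finite_toSet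
      (fun j _ => walkP_support_finite G hlf j x₀)
  refine ⟨hfin.toFinset, fun j hj w hw => hfin.mem_toFinset.2 ?_⟩
  exact Set.mem_biUnion (Finset.mem_coe.mpr (Finset.mem_range.mpr (by omega))) hw

lemma qk_nonneg (x₀ : V) (k : ℕ) : 0 ≤ qk G x₀ k := hkP_nonneg G k x₀ x₀

lemma ak_nonneg (x₀ : V) (k : ℕ) : 0 ≤ ak G x₀ k :=
  add_nonneg (qk_nonneg G x₀ k) (qk_nonneg G x₀ (k + 1))

lemma ck_nonneg (hconn : G.Connected) (hlf : ∀ v : V, (G.neighborSet v).Finite)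
    (x₀ : V) (k : ℕ) : 0 ≤ ck G x₀ k := by
  obtain ⟨S, hS⟩ := exists_S G hlf x₀ (max k k + 2)
  have hB := Bq_ffk G hconn hlf x₀ S k k hS
  have hpos : 0 ≤ ∑ x ∈ S, ∑ y ∈ S, (if G.Adj x y then (1:ℝ) else 0) *
      ((ffk G x₀ k x - ffk G x₀ k y) * (ffk G x₀ k x - ffk G x₀ k y)) := by
    apply Finset.sum_nonneg
    intro x _
    apply Finset.sum_nonneg
    intro y _
    by_cases h : G.Adj x y
    · rw [if_pos h, one_mul]
      exact mul_self_nonneg _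
    · rw [if_neg h, zero_mul]
  rw [hB] at hpos
  simp only [ck]
  rw [show 2 * k = k + k from by ring]
  linarith

lemma ck_sq (hconn : G.Connected) (hlf : ∀ v : V, (G.neighborSet v).Finite)
    (x₀ : V) (k : ℕ) : ck G x₀ (k + 1) ^ 2 ≤ ck G x₀ k * ck G x₀ (k + 2) := by
  obtain ⟨S, hS⟩ := exists_S G hlf x₀ (2 * k + 6)
  have hB1 := Bq_ffk G hconn hlf x₀ S k k (fun j hj => hS j (by omega))
  have hB2 := Bq_ffk G hconn hlf x₀ S (k + 2) (k + 2) (fun j hj => hS j (by omega))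
  have hB3 := Bq_ffk G hconn hlf x₀ S (k + 2) k (fun j hj => hS j (by omega))
  have key : ∀ k' l' : ℕ, ∑ x ∈ S, ∑ y ∈ S, (if G.Adj x y then (1:ℝ) else 0) *
        ((ffk G x₀ k' x - ffk G x₀ k' y) * (ffk G x₀ l' x - ffk G x₀ l' y))
      = ∑ p ∈ S ×ˢ S,
          ((if G.Adj p.1 p.2 then (1:ℝ) else 0) * (ffk G x₀ k' p.1 - ffk G x₀ k' p.2))
          * ((if G.Adj p.1 p.2 then (1:ℝ) else 0) * (ffk G x₀ l' p.1 - ffk G x₀ l' p.2)) := by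
    intro k' l'
    rw [Finset.sum_product]
    refine Finset.sum_congr rfl fun x _ => Finset.sum_congr rfl fun y _ => ?_
    by_cases h : G.Adj x y <;> simp [h]
  have hCS := Finset.sum_mul_sq_le_sq_mul_sq (S ×ˢ S)
    (fun p => (if G.Adj p.1 p.2 then (1:ℝ) else 0) * (ffk G x₀ (k + 2) p.1 - ffk G x₀ (k + 2) p.2))
    (fun p => (if G.Adj p.1 p.2 then (1:ℝ) else 0) * (ffk G x₀ k p.1 - ffk G x₀ k p.2))
  have e3 : (∑ p ∈ S ×ˢ S,
      ((if G.Adj p.1 p.2 then (1:ℝ) else 0) * (ffk G x₀ (k + 2) p.1 - ffk G x₀ (k + 2) p.2))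
      * ((if G.Adj p.1 p.2 then (1:ℝ) else 0) * (ffk G x₀ k p.1 - ffk G x₀ k p.2)))
      = 2 * ck G x₀ (k + 1) := by
    rw [← key (k + 2) k, hB3]
    simp only [ck]
    rw [show k + 2 + k = 2 * (k + 1) from by ring, show 2 * (k + 1) + 2 = k + 2 + k + 2 from by ring]
  have e2 : (∑ p ∈ S ×ˢ S,
      ((if G.Adj p.1 p.2 then (1:ℝ) else 0) * (ffk G x₀ (k + 2) p.1 - ffk G x₀ (k + 2) p.2)) ^ 2)
      = 2 * ck G x₀ (k + 2) := by
    have := key (k + 2) (k + 2)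
    rw [hB2] at this
    rw [show (∑ p ∈ S ×ˢ S,
        ((if G.Adj p.1 p.2 then (1:ℝ) else 0) * (ffk G x₀ (k + 2) p.1 - ffk G x₀ (k + 2) p.2)) ^ 2)
        = ∑ p ∈ S ×ˢ S,
        ((if G.Adj p.1 p.2 then (1:ℝ) else 0) * (ffk G x₀ (k + 2) p.1 - ffk G x₀ (k + 2) p.2))
        * ((if G.Adj p.1 p.2 then (1:ℝ) else 0) * (ffk G x₀ (k + 2) p.1 - ffk G x₀ (k + 2) p.2))
        from Finset.sum_congr rfl fun p _ => pow_two _]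
    rw [← this]
    simp only [ck]
    rw [show k + 2 + (k + 2) = 2 * (k + 2) from by ring]
  have e1 : (∑ p ∈ S ×ˢ S,
      ((if G.Adj p.1 p.2 then (1:ℝ) else 0) * (ffk G x₀ k p.1 - ffk G x₀ k p.2)) ^ 2)
      = 2 * ck G x₀ k := by
    have := key k k
    rw [hB1] at this
    rw [show (∑ p ∈ S ×ˢ S,
        ((if G.Adj p.1 p.2 then (1:ℝ) else 0) * (ffk G x₀ k p.1 - ffk G x₀ k p.2)) ^ 2)
        = ∑ p ∈ S ×ˢ S,
        ((if G.Adj p.1 p.2 then (1:ℝ) else 0) * (ffk G x₀ k p.1 - ffk G x₀ k p.2))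
        * ((if G.Adj p.1 p.2 then (1:ℝ) else 0) * (ffk G x₀ k p.1 - ffk G x₀ k p.2))
        from Finset.sum_congr rfl fun p _ => pow_two _]
    rw [← this]
    simp only [ck]
    rw [show k + k = 2 * k from by ring]
  rw [e1, e2, e3] at hCS
  nlinarith [hCS]

lemma ck_le_a0 (hconn : G.Connected) (hlf : ∀ v : V, (G.neighborSet v).Finite)
    (x₀ : V) (k : ℕ) : ck G x₀ k ≤ ak G x₀ 0 := by
  have h1 : ∀ j, ak G x₀ (2 * (j + 1)) ≤ ak G x₀ (2 * j) := by
    intro j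
    have := ck_nonneg G hconn hlf x₀ j
    simp only [ck] at this
    rw [show 2 * (j + 1) = 2 * j + 2 from by ring]
    linarith
  have h2 : ∀ j, ak G x₀ (2 * j) ≤ ak G x₀ 0 := by
    intro j
    induction j with
    | zero => simp
    | succ j ih => exact le_trans (h1 j) ih
  have h3 := ak_nonneg G x₀ (2 * k + 2)
  simp only [ck]
  linarith [h2 k]

lemma ck_antitone (hconn : G.Connected) (hlf : ∀ v : V, (G.neighborSet v).Finite)
    (x₀ : V) (k : ℕ) : ck G x₀ (k + 1) ≤ ck G x₀ k := by
  by_contra hcon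
  push_neg at hcon
  have h0 := ck_nonneg G hconn hlf x₀ k
  have hkpos : 0 < ck G x₀ k := by
    rcases eq_or_lt_of_le h0 with he | h
    · exfalso
      have hsq := ck_sq G hconn hlf x₀ k
      rw [← he] at hsq
      nlinarith
    · exact h
  set r := ck G x₀ (k + 1) / ck G x₀ k with hr
  have hr1 : 1 < r := (one_lt_div hkpos).2 hcon
  have hr0 : 0 < r := lt_trans one_pos hr1
  have main : ∀ j, 0 < ck G x₀ (k + j) ∧ r * ck G x₀ (k + j) ≤ ck G x₀ (k + j + 1) := by
    intro j
    induction j with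
    | zero =>
        refine ⟨by simpa using hkpos, ?_⟩
        have : r * ck G x₀ k = ck G x₀ (k + 1) := by
          rw [hr, div_mul_cancel₀ _ (ne_of_gt hkpos)]
        simp only [Nat.add_zero]
        rw [this]
    | succ j ih =>
        obtain ⟨hp, hs⟩ := ih
        have hp1 : 0 < ck G x₀ (k + j + 1) :=
          lt_of_lt_of_le (mul_pos hr0 hp) hs
        have hq := ck_sq G hconn hlf x₀ (k + j)
        refine ⟨by rw [show k + (j + 1) = k + j + 1 from by omega]; exact hp1, ?_⟩
        rw [show k + (j + 1) = k + j + 1 from by omega,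
          show k + j + 1 + 1 = k + j + 2 from by omega]
        nlinarith [hp, hp1, hs, hq]
  have growth : ∀ j, ck G x₀ (k + 1) * r ^ j ≤ ck G x₀ (k + 1 + j) := by
    intro j
    induction j with
    | zero => simp
    | succ j ih =>
        have hstep := (main (1 + j)).2
        rw [show k + (1 + j) = k + 1 + j from by omega,
          show k + 1 + j + 1 = k + 1 + (j + 1) from by omega] at hstep
        calc ck G x₀ (k + 1) * r ^ (j + 1) = r * (ck G x₀ (k + 1) * r ^ j) := by ring
          _ ≤ r * ck G x₀ (k + 1 + j) := by
              exact mul_le_mul_of_nonneg_left ih (le_of_lt hr0)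
          _ ≤ ck G x₀ (k + 1 + (j + 1)) := hstep
  have hck1 : 0 < ck G x₀ (k + 1) := by
    have := (main 1).1
    rwa [show k + 1 = k + 1 from rfl] at this
  obtain ⟨j, hj⟩ := pow_unbounded_of_one_lt (ak G x₀ 0 / ck G x₀ (k + 1)) hr1
  rw [div_lt_iff₀ hck1] at hj
  have hle := ck_le_a0 G hconn hlf x₀ (k + 1 + j)
  have := growth j
  nlinarith

lemma ck_mono (hconn : G.Connected) (hlf : ∀ v : V, (G.neighborSet v).Finite)
    (x₀ : V) {i j : ℕ} (h : i ≤ j) : ck G x₀ j ≤ ck G x₀ i := by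
  induction j, h using Nat.le_induction with
  | base => exact le_refl _
  | succ j hij ih => exact le_trans (ck_antitone G hconn hlf x₀ j) ih

lemma sum_ck (x₀ : V) {m n : ℕ} (h : m ≤ n) :
    ∑ k ∈ Finset.Ico m n, ck G x₀ k = ak G x₀ (2 * m) - ak G x₀ (2 * n) := by
  induction n, h using Nat.le_induction with
  | base => simp
  | succ n hmn ih =>
      rw [Finset.sum_Ico_succ_top hmn, ih]
      simp only [ck]
      rw [show 2 * (n + 1) = 2 * n + 2 from by ring]
      ring

lemma ck_key_bound (hconn : G.Connected) (hlf : ∀ v : V, (G.neighborSet v).Finite)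
    (x₀ : V) {n : ℕ} (hn : 1 ≤ n) :
    (n : ℝ) * ck G x₀ n ≤ 2 * ak G x₀ (2 * (n / 2)) := by
  set m := n / 2 with hm
  have hmn : m ≤ n := Nat.div_le_self n 2
  have hsum := sum_ck G x₀ (show m ≤ n from hmn)
  have hterm : ∀ k ∈ Finset.Ico m n, ck G x₀ n ≤ ck G x₀ k := fun k hk =>
    ck_mono G hconn hlf x₀ (le_of_lt (Finset.mem_Ico.1 hk).2)
  have h1 : (Finset.Ico m n).card • ck G x₀ n ≤ ∑ k ∈ Finset.Ico m n, ck G x₀ k :=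
    Finset.card_nsmul_le_sum _ _ _ hterm
  rw [Nat.card_Ico, nsmul_eq_mul, hsum] at h1
  have h2 : ((n - m : ℕ) : ℝ) * ck G x₀ n ≤ ak G x₀ (2 * m) := by
    linarith [ak_nonneg G x₀ (2 * n)]
  have h3 : (n : ℝ) ≤ 2 * ((n - m : ℕ) : ℝ) := by
    have : n ≤ 2 * (n - m) := by omega
    exact_mod_cast this
  nlinarith [ck_nonneg G hconn hlf x₀ n, h2, h3]

end Seq

section Path

variable {G : SimpleGraph V}

lemma getVert_inj {u v : V} {p : G.Walk u v} (hp : p.IsPath) {i j : ℕ}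
    (hi : i ≤ p.length) (hj : j ≤ p.length) (h : p.getVert i = p.getVert j) : i = j := by
  induction p generalizing i j with
  | nil => simp only [SimpleGraph.Walk.length_nil, Nat.le_zero] at hi hj; omega
  | cons hadj q ih =>
      rw [SimpleGraph.Walk.cons_isPath_iff] at hp
      simp only [SimpleGraph.Walk.length_cons] at hi hj
      cases i with
      | zero =>
          cases j with
          | zero => rfl
          | succ j =>
              exfalso
              apply hp.2
              rw [SimpleGraph.Walk.mem_support_iff_exists_getVert]
              exact ⟨j, by simpa using h.symm, by omega⟩
      | succ i =>
          cases j with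
          | zero =>
              exfalso
              apply hp.2
              rw [SimpleGraph.Walk.mem_support_iff_exists_getVert]
              exact ⟨i, by simpa using h, by omega⟩
          | succ j =>
              have := ih hp.1 (Nat.succ_le_succ_iff.mp hi) (Nat.succ_le_succ_iff.mp hj) (by simpa using h)
              omega

end Path

section Main

variable (G : SimpleGraph V) [Infinite V]

lemma energy_bound (hconn : G.Connected) (hlf : ∀ v : V, (G.neighborSet v).Finite)
    (x₀ : V) (n : ℕ) {u v : V} (p : G.Walk u v) (hp : p.IsPath) :
    ∑ i ∈ Finset.range p.length,
        (ffk G x₀ n (p.getVert (i + 1)) - ffk G x₀ n (p.getVert i)) ^ 2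
      ≤ ck G x₀ n := by
  classical
  obtain ⟨S, hS⟩ := exists_S G hlf x₀ (max n n + 2)
  have hB := Bq_ffk G hconn hlf x₀ S n n hS
  set F : V → ℝ := ffk G x₀ n with hF
  set W : V × V → ℝ := fun pr =>
    (if G.Adj pr.1 pr.2 then (1:ℝ) else 0) * ((F pr.1 - F pr.2) * (F pr.1 - F pr.2)) with hW
  have hWnn : ∀ pr : V × V, 0 ≤ W pr := by
    intro pr
    rw [hW]
    by_cases h : G.Adj pr.1 pr.2
    · simp only [if_pos h, one_mul]
      exact mul_self_nonneg _
    · simp [if_neg h]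
  have hSS : ∑ pr ∈ S ×ˢ S, W pr = 2 * ck G x₀ n := by
    rw [Finset.sum_product, hB]
    simp only [ck]
    rw [show n + n = 2 * n from by ring]
  set L := p.length with hL
  set φ : ℕ → V × V := fun i => (p.getVert i, p.getVert (i + 1)) with hφ
  set ψ : ℕ → V × V := fun i => (p.getVert (i + 1), p.getVert i) with hψ
  have hφinj : ∀ i ∈ Finset.range L, ∀ j ∈ Finset.range L, φ i = φ j → i = j := by
    intro i hi j hj h
    exact getVert_inj hp (by simp at hi; omega) (by simp at hj; omega)
      (congrArg Prod.fst h)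
  have hψinj : ∀ i ∈ Finset.range L, ∀ j ∈ Finset.range L, ψ i = ψ j → i = j := by
    intro i hi j hj h
    have := getVert_inj hp (by simp at hi; omega) (by simp at hj; omega)
      (congrArg Prod.snd h)
    exact this
  set Q1 := (Finset.range L).image φ with hQ1
  set Q2 := (Finset.range L).image ψ with hQ2
  have hdisj : Disjoint Q1 Q2 := by
    rw [Finset.disjoint_left]
    intro pr hpr1 hpr2
    rw [hQ1, Finset.mem_image] at hpr1
    rw [hQ2, Finset.mem_image] at hpr2
    obtain ⟨i, hi, rfl⟩ := hpr1
    obtain ⟨j, hj, hji⟩ := hpr2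
    simp only [Finset.mem_range] at hi hj
    have h1 : p.getVert (j + 1) = p.getVert i := congrArg Prod.fst hji
    have h2 : p.getVert j = p.getVert (i + 1) := congrArg Prod.snd hji
    have e1 : j + 1 = i := getVert_inj hp (by omega) (by omega) h1
    have e2 : j = i + 1 := getVert_inj hp (by omega) (by omega) h2
    omega
  have hsum1 : ∑ pr ∈ Q1, W pr
      = ∑ i ∈ Finset.range L, (F (p.getVert (i + 1)) - F (p.getVert i)) ^ 2 := by
    rw [hQ1, Finset.sum_image hφinj]
    refine Finset.sum_congr rfl fun i hi => ?_
    have hadj : G.Adj (p.getVert i) (p.getVert (i + 1)) :=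
      p.adj_getVert_succ (by simpa using hi)
    rw [hW]
    simp only [hφ, if_pos hadj, one_mul]
    ring
  have hsum2 : ∑ pr ∈ Q2, W pr
      = ∑ i ∈ Finset.range L, (F (p.getVert (i + 1)) - F (p.getVert i)) ^ 2 := by
    rw [hQ2, Finset.sum_image hψinj]
    refine Finset.sum_congr rfl fun i hi => ?_
    have hadj : G.Adj (p.getVert i) (p.getVert (i + 1)) :=
      p.adj_getVert_succ (by simpa using hi)
    rw [hW]
    simp only [hψ, if_pos hadj.symm, one_mul]
    ring
  have hQS : ∑ pr ∈ Q1 ∪ Q2, W pr ≤ ∑ pr ∈ S ×ˢ S, W pr := by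
    have hvanish : ∀ pr ∈ Q1 ∪ Q2, pr ∉ (Q1 ∪ Q2) ∩ (S ×ˢ S) → W pr = 0 := by
      intro pr hpr hout
      by_contra hne
      apply hout
      rw [Finset.mem_inter]
      refine ⟨hpr, ?_⟩
      have hadj : G.Adj pr.1 pr.2 := by
        by_contra hna
        exact hne (by rw [hW]; simp [if_neg hna])
      have hdiff : F pr.1 - F pr.2 ≠ 0 := by
        intro hz
        exact hne (by rw [hW]; simp [hz])
      have hFne : F pr.1 ≠ 0 ∨ F pr.2 ≠ 0 := by
        by_contra hcc
        push_neg at hcc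
        rw [hcc.1, hcc.2, sub_zero] at hdiff
        exact hdiff rfl
      rw [Finset.mem_product]
      rcases hFne with h1 | h1
      · have hin1 : pr.1 ∈ S := by
          rcases ffk_ne_zero G h1 with h | h
          · exact hS n (by omega) _ h
          · exact hS (n + 1) (by omega) _ h
        have hin2 : pr.2 ∈ S := by
          rcases ffk_ne_zero G h1 with h | h
          · exact hS (n + 1) (by omega) _ (walkP_ne_zero_step G hlf h hadj)
          · exact hS (n + 2) (by omega) _ (walkP_ne_zero_step G hlf h hadj)
        exact ⟨hin1, hin2⟩
      · have hin2 : pr.2 ∈ S := by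
          rcases ffk_ne_zero G h1 with h | h
          · exact hS n (by omega) _ h
          · exact hS (n + 1) (by omega) _ h
        have hin1 : pr.1 ∈ S := by
          rcases ffk_ne_zero G h1 with h | h
          · exact hS (n + 1) (by omega) _ (walkP_ne_zero_step G hlf h hadj.symm)
          · exact hS (n + 2) (by omega) _ (walkP_ne_zero_step G hlf h hadj.symm)
        exact ⟨hin1, hin2⟩
    rw [show ∑ pr ∈ Q1 ∪ Q2, W pr = ∑ pr ∈ (Q1 ∪ Q2) ∩ (S ×ˢ S), W pr from
      (Finset.sum_subset Finset.inter_subset_left hvanish).symm]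
    exact Finset.sum_le_sum_of_subset_of_nonneg Finset.inter_subset_right
      (fun pr _ _ => hWnn pr)
  have htwo : 2 * ∑ i ∈ Finset.range L, (F (p.getVert (i + 1)) - F (p.getVert i)) ^ 2
      = ∑ pr ∈ Q1 ∪ Q2, W pr := by
    rw [Finset.sum_union hdisj, hsum1, hsum2]
    ring
  have : 2 * ∑ i ∈ Finset.range L, (F (p.getVert (i + 1)) - F (p.getVert i)) ^ 2
      ≤ 2 * ck G x₀ n := by
    rw [htwo, ← hSS]
    exact hQS
  linarith

lemma path_bound (hconn : G.Connected) (hlf : ∀ v : V, (G.neighborSet v).Finite)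
    (x₀ y : V) (n : ℕ) :
    (ffk G x₀ n y - ffk G x₀ n x₀) ^ 2 ≤ (G.dist x₀ y : ℝ) * ck G x₀ n := by
  obtain ⟨w, hw⟩ := (hconn.preconnected x₀ y).exists_walk_length_eq_dist
  set p := w.bypass with hpdef
  have hp : p.IsPath := w.bypass_isPath
  have hlen : p.length ≤ G.dist x₀ y := hw ▸ w.length_bypass_le
  set F : V → ℝ := ffk G x₀ n with hF
  have htel : F y - F x₀
      = ∑ i ∈ Finset.range p.length, (F (p.getVert (i + 1)) - F (p.getVert i)) := by
    rw [Finset.sum_range_sub (fun i => F (p.getVert i))]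
    simp
  have hCS : (F y - F x₀) ^ 2
      ≤ (p.length : ℝ) * ∑ i ∈ Finset.range p.length,
          (F (p.getVert (i + 1)) - F (p.getVert i)) ^ 2 := by
    rw [htel]
    have := sq_sum_le_card_mul_sum_sq (s := Finset.range p.length)
      (f := fun i => F (p.getVert (i + 1)) - F (p.getVert i))
    simpa using this
  have henergy := energy_bound G hconn hlf x₀ n p hp
  have hck := ck_nonneg G hconn hlf x₀ n
  have hlenR : (p.length : ℝ) ≤ (G.dist x₀ y : ℝ) := by exact_mod_cast hlen
  calc (F y - F x₀) ^ 2
      ≤ (p.length : ℝ) * ∑ i ∈ Finset.range p.length,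
          (F (p.getVert (i + 1)) - F (p.getVert i)) ^ 2 := hCS
    _ ≤ (p.length : ℝ) * ck G x₀ n := by
        apply mul_le_mul_of_nonneg_left henergy
        positivity
    _ ≤ (G.dist x₀ y : ℝ) * ck G x₀ n := mul_le_mul_of_nonneg_right hlenR hck

end Main



/-- heat-kernel oscillation bound: with `f_n(y) = p_n(x₀,y) + p_{n+1}(x₀,y)`,
`|f_n(y) − f_n(x₀)|² ≤ (2/n)·d(x₀,y)·f_{2⌊n/2⌋}(x₀)` for all vertices `y`. -/
theorem heat_kernel_oscillation (G : SimpleGraph V) [Infinite V]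
    (hconn : G.Connected) (hlf : ∀ v : V, (G.neighborSet v).Finite)
    (x₀ : V) (n : ℕ) (hn : 1 ≤ n) (y : V) :
    ((hkP G n x₀ y + hkP G (n + 1) x₀ y) - (hkP G n x₀ x₀ + hkP G (n + 1) x₀ x₀)) ^ 2
      ≤ (2 / n) * (G.dist x₀ y : ℝ)
        * (hkP G (2 * (n / 2)) x₀ x₀ + hkP G (2 * (n / 2) + 1) x₀ x₀) := by
  have h1 := path_bound G hconn hlf x₀ y n
  have h2 := ck_key_bound G hconn hlf x₀ hn
  have hnpos : (0:ℝ) < n := by exact_mod_cast hn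
  have hdist : (0:ℝ) ≤ (G.dist x₀ y : ℝ) := by positivity
  have hck := ck_nonneg G hconn hlf x₀ n
  have hLHS : ((hkP G n x₀ y + hkP G (n + 1) x₀ y)
      - (hkP G n x₀ x₀ + hkP G (n + 1) x₀ x₀)) ^ 2
      = (ffk G x₀ n y - ffk G x₀ n x₀) ^ 2 := by
    simp [ffk]
  have hRHS : (2 / n) * (G.dist x₀ y : ℝ)
        * (hkP G (2 * (n / 2)) x₀ x₀ + hkP G (2 * (n / 2) + 1) x₀ x₀)
      = (2 / n) * (G.dist x₀ y : ℝ) * ak G x₀ (2 * (n / 2)) := by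
    simp [ak, qk]
  rw [hLHS, hRHS]
  have h3 : ck G x₀ n ≤ 2 / n * ak G x₀ (2 * (n / 2)) := by
    rw [div_mul_eq_mul_div, le_div_iff₀ hnpos]
    linarith [h2]
  calc (ffk G x₀ n y - ffk G x₀ n x₀) ^ 2
      ≤ (G.dist x₀ y : ℝ) * ck G x₀ n := h1
    _ ≤ (G.dist x₀ y : ℝ) * (2 / n * ak G x₀ (2 * (n / 2))) :=
        mul_le_mul_of_nonneg_left h3 hdist
    _ = (2 / n) * (G.dist x₀ y : ℝ) * ak G x₀ (2 * (n / 2)) := by ring
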